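/- For all sufficiently small h > 0 the block Ω_h^RR is invertible, and as h → 0⁺ one has (Ω_h^RR)⁻¹ = (1/h)·S⁻¹ − (1/2)(S⁻¹ A_v + A_vᵀ S⁻¹) + O(h). -/

import Mathlib

set_option maxHeartbeats 1000000



open MeasureTheory Matrix

attribute [local instance] Matrix.normedAddCommGroup

/-- The block drift matrix `Ã = [[0, I],[A_x, A_v]]`. -/
noncomputable def Atilde {d : ℕ} (Ax Av : Matrix (Fin d) (Fin d) ℝ) :
    Matrix (Fin d ⊕ Fin d) (Fin d ⊕ Fin d) ℝ :=
  Matrix.fromBlocks 0 1 Ax Av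

/-- The block diffusion matrix `S̃ = [[0,0],[0,S]]`. -/
noncomputable def Stilde {d : ℕ} (S : Matrix (Fin d) (Fin d) ℝ) :
    Matrix (Fin d ⊕ Fin d) (Fin d ⊕ Fin d) ℝ :=
  Matrix.fromBlocks 0 0 0 S

/-- The entrywise integral `Ω̃_h = ∫₀ʰ exp(Ã(h−u)) S̃ exp(Ãᵀ(h−u)) du`. -/
noncomputable def OmegaTilde {d : ℕ} (Ax Av S : Matrix (Fin d) (Fin d) ℝ) (h : ℝ) :
    Matrix (Fin d ⊕ Fin d) (Fin d ⊕ Fin d) ℝ :=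
  Matrix.of fun i j =>
    ∫ u in (0:ℝ)..h,
      (NormedSpace.exp ((h - u) • Atilde Ax Av) * Stilde S *
        NormedSpace.exp ((h - u) • (Atilde Ax Av)ᵀ)) i j

/-- Top-left `d×d` block `Ω_h^SS`. -/
noncomputable def OmegaSS {d : ℕ} (Ax Av S : Matrix (Fin d) (Fin d) ℝ) (h : ℝ) :
    Matrix (Fin d) (Fin d) ℝ := (OmegaTilde Ax Av S h).toBlocks₁₁

/-- Top-right `d×d` block `Ω_h^SR`. -/
noncomputable def OmegaSR {d : ℕ} (Ax Av S : Matrix (Fin d) (Fin d) ℝ) (h : ℝ) :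
    Matrix (Fin d) (Fin d) ℝ := (OmegaTilde Ax Av S h).toBlocks₁₂

/-- Bottom-left `d×d` block `Ω_h^RS`. -/
noncomputable def OmegaRS {d : ℕ} (Ax Av S : Matrix (Fin d) (Fin d) ℝ) (h : ℝ) :
    Matrix (Fin d) (Fin d) ℝ := (OmegaTilde Ax Av S h).toBlocks₂₁

/-- Bottom-right `d×d` block `Ω_h^RR`. -/
noncomputable def OmegaRR {d : ℕ} (Ax Av S : Matrix (Fin d) (Fin d) ℝ) (h : ℝ) :
    Matrix (Fin d) (Fin d) ℝ := (OmegaTilde Ax Av S h).toBlocks₂₂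


open NormedSpace Nat


lemma exp_remainder {A : Type*} [NormedRing A] [NormedAlgebra ℝ A] [CompleteSpace A] (x : A) :
    ‖exp x - 1 - x‖ ≤ ‖x‖^2 * Real.exp ‖x‖ := by
  have hs : Summable (fun n => ((n ! : ℝ))⁻¹ • x ^ n) := expSeries_summable' x
  have h2 : exp x = (1 + x) + ∑' i : ℕ, (((i+2)! : ℝ))⁻¹ • x ^ (i+2) := by
    rw [exp_eq_tsum ℝ]
    beta_reduce
    rw [← hs.sum_add_tsum_nat_add 2]
    simp [Finset.sum_range_succ]
  have hrem : exp x - 1 - x = ∑' i : ℕ, (((i+2)! : ℝ))⁻¹ • x ^ (i+2) := by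
    rw [h2]; abel
  rw [hrem]
  have hsn : Summable (fun i : ℕ => ‖(((i+2)! : ℝ))⁻¹ • x ^ (i+2)‖) :=
    (summable_nat_add_iff 2).mpr (norm_expSeries_summable' x)
  have hdom : Summable (fun i : ℕ => ‖x‖^2 * (‖x‖ ^ i / i !)) :=
    (Real.summable_pow_div_factorial ‖x‖).mul_left _
  calc ‖∑' i : ℕ, (((i+2)! : ℝ))⁻¹ • x ^ (i+2)‖
      ≤ ∑' i : ℕ, ‖(((i+2)! : ℝ))⁻¹ • x ^ (i+2)‖ := norm_tsum_le_tsum_norm hsn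
    _ ≤ ∑' i : ℕ, ‖x‖^2 * (‖x‖ ^ i / i !) := by
        refine Summable.tsum_le_tsum (fun i => ?_) hsn hdom
        rw [norm_smul]
        have h1 : ‖x ^ (i+2)‖ ≤ ‖x‖^(i+2) := norm_pow_le' x (by omega)
        have h2 : (((i+2)! : ℝ))⁻¹ ≤ ((i ! : ℝ))⁻¹ := by
          apply inv_anti₀
          · positivity
          · exact_mod_cast Nat.factorial_le (by omega)
        have h3 : ‖(((i+2)! : ℝ))⁻¹‖ = (((i+2)! : ℝ))⁻¹ := by
          rw [Real.norm_eq_abs, abs_of_nonneg (by positivity)]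
        rw [h3]
        calc (((i+2)! : ℝ))⁻¹ * ‖x ^ (i+2)‖ ≤ ((i ! : ℝ))⁻¹ * ‖x‖^(i+2) :=
              mul_le_mul h2 h1 (norm_nonneg _) (by positivity)
          _ = ‖x‖^2 * (‖x‖ ^ i / i !) := by rw [pow_add]; ring
    _ = ‖x‖^2 * Real.exp ‖x‖ := by
        rw [tsum_mul_left]
        have hre : Real.exp ‖x‖ = ∑' i : ℕ, ‖x‖ ^ i / i ! := by
          rw [Real.exp_eq_exp_ℝ, exp_eq_tsum_div]
        rw [hre]


section LinftyWorld
variable {m : Type*} [Fintype m] [DecidableEq m]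
attribute [local instance 2000] Matrix.linftyOpNormedAddCommGroup Matrix.linftyOpNormedRing
  Matrix.linftyOpNormedAlgebra

example (X Y : Matrix m m ℝ) : ‖X * Y‖ ≤ ‖X‖ * ‖Y‖ := norm_mul_le X Y

lemma entry_le_linfty (M : Matrix m m ℝ) (i j : m) : |M i j| ≤ ‖M‖ := by
  rw [Matrix.linfty_opNorm_def]
  have h1 : ‖M i j‖₊ ≤ ∑ j', ‖M i j'‖₊ :=
    Finset.single_le_sum (f := fun j' => ‖M i j'‖₊) (fun _ _ => by positivity) (Finset.mem_univ j)
  have h2 : (∑ j', ‖M i j'‖₊) ≤ Finset.univ.sup fun i => ∑ j', ‖M i j'‖₊ :=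
    Finset.le_sup (f := fun i => ∑ j', ‖M i j'‖₊) (Finset.mem_univ i)
  calc |M i j| = (‖M i j‖₊ : ℝ) := rfl
    _ ≤ _ := by exact_mod_cast h1.trans h2

lemma exp_cont : Continuous (fun t : ℝ => exp (t • (1 : Matrix m m ℝ))) :=
  exp_continuous.comp (continuous_id.smul continuous_const)

end LinftyWorld

section LinftyWorld2
variable {m : Type*} [Fintype m] [DecidableEq m]
attribute [local instance 2000] Matrix.linftyOpNormedAddCommGroup Matrix.linftyOpNormedRing
  Matrix.linftyOpNormedAlgebra

lemma prod_expansion (A B S : Matrix m m ℝ) :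
    ∃ K > (0:ℝ), ∀ t : ℝ, 0 ≤ t → t ≤ 1 → ∀ i j,
      |(exp (t • A) * S * exp (t • B) - S - t • (A * S + S * B)) i j| ≤ K * t ^ 2 := by
  set n1 : ℝ := ‖(1 : Matrix m m ℝ)‖ with hn1
  set K₁ : ℝ := max (‖A‖^2 * Real.exp ‖A‖) (‖B‖^2 * Real.exp ‖B‖) with hK₁
  have hK₁0 : 0 ≤ K₁ := le_trans (by positivity) (le_max_left _ _)
  set K : ℝ := ‖A‖*‖S‖*‖B‖ + (n1+‖A‖)*‖S‖*K₁ + K₁*(‖S‖*(n1+‖B‖)) + K₁*‖S‖*K₁ + 1 with hK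
  refine ⟨K, by positivity, fun t ht0 ht1 i j => ?_⟩
  set P := exp (t • A) with hP
  set Q := exp (t • B) with hQ
  set R₁ := P - 1 - t • A with hR₁
  set R₂ := Q - 1 - t • B with hR₂
  have hsm : ∀ X : Matrix m m ℝ, ‖t • X‖ = t * ‖X‖ := fun X => by
    rw [norm_smul, Real.norm_eq_abs, abs_of_nonneg ht0]
  have hrem : ∀ X : Matrix m m ℝ, ‖exp (t•X) - 1 - t•X‖ ≤ (‖X‖^2 * Real.exp ‖X‖) * t^2 := by
    intro X
    refine (exp_remainder (t • X)).trans ?_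
    rw [hsm X]
    have h1 : Real.exp (t * ‖X‖) ≤ Real.exp ‖X‖ :=
      Real.exp_le_exp.mpr (by nlinarith [norm_nonneg X])
    have h2 : (t*‖X‖)^2 = ‖X‖^2 * t^2 := by ring
    rw [h2]
    have := norm_nonneg X
    nlinarith [Real.exp_pos (t * ‖X‖)]
  have hR₁n : ‖R₁‖ ≤ K₁ * t^2 :=
    (hrem A).trans (by nlinarith [le_max_left (‖A‖^2 * Real.exp ‖A‖) (‖B‖^2 * Real.exp ‖B‖)])
  have hR₂n : ‖R₂‖ ≤ K₁ * t^2 :=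
    (hrem B).trans (by nlinarith [le_max_right (‖A‖^2 * Real.exp ‖A‖) (‖B‖^2 * Real.exp ‖B‖)])
  have hPe : P = 1 + t • A + R₁ := by rw [hR₁]; abel
  have hQe : Q = 1 + t • B + R₂ := by rw [hR₂]; abel
  have hid : P*S*Q - S - t•(A*S + S*B) =
      (t^2) • (A*S*B) + (1+t•A)*S*R₂ + R₁*S*(1+t•B) + R₁*S*R₂ := by
    rw [hPe, hQe]
    simp only [add_mul, mul_add, smul_mul_assoc, mul_smul_comm, one_mul, mul_one, smul_smul,
      smul_add]
    module
  have e1 : ‖(t^2) • (A*S*B)‖ ≤ (‖A‖*‖S‖*‖B‖) * t^2 := by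
    rw [norm_smul, Real.norm_eq_abs, abs_of_nonneg (by positivity)]
    have := (norm_mul_le (A*S) B).trans
      (mul_le_mul_of_nonneg_right (norm_mul_le A S) (norm_nonneg B))
    nlinarith [sq_nonneg t]
  have hone : ∀ X : Matrix m m ℝ, ‖1 + t • X‖ ≤ n1 + ‖X‖ := by
    intro X
    refine (norm_add_le _ _).trans ?_
    rw [hsm]
    nlinarith [norm_nonneg X]
  have e2 : ‖(1+t•A)*S*R₂‖ ≤ (n1+‖A‖)*‖S‖*K₁ * t^2 := by
    refine (norm_mul_le _ _).trans ?_
    have h1 : ‖(1+t•A)*S‖ ≤ (n1+‖A‖)*‖S‖ :=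
      (norm_mul_le _ _).trans (mul_le_mul_of_nonneg_right (hone A) (norm_nonneg S))
    have h2 : (0:ℝ) ≤ n1 + ‖A‖ := add_nonneg (norm_nonneg _) (norm_nonneg _)
    calc ‖(1+t•A)*S‖ * ‖R₂‖ ≤ ((n1+‖A‖)*‖S‖) * (K₁ * t^2) :=
          mul_le_mul h1 hR₂n (norm_nonneg _) (by positivity)
      _ = (n1+‖A‖)*‖S‖*K₁ * t^2 := by ring
  have e3 : ‖R₁*S*(1+t•B)‖ ≤ K₁*(‖S‖*(n1+‖B‖)) * t^2 := by
    refine (norm_mul_le _ _).trans ?_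
    have h1 : ‖R₁*S‖ ≤ K₁*t^2*‖S‖ :=
      (norm_mul_le _ _).trans (mul_le_mul_of_nonneg_right hR₁n (norm_nonneg S))
    calc ‖R₁*S‖ * ‖1+t•B‖ ≤ (K₁*t^2*‖S‖) * (n1+‖B‖) :=
          mul_le_mul h1 (hone B) (norm_nonneg _) (by positivity)
      _ = K₁*(‖S‖*(n1+‖B‖)) * t^2 := by ring
  have e4 : ‖R₁*S*R₂‖ ≤ K₁*‖S‖*K₁ * t^2 := by
    have ht2 : t^2 ≤ 1 := by nlinarith
    have h1 : ‖R₁*S‖ ≤ K₁*t^2*‖S‖ :=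
      (norm_mul_le _ _).trans (mul_le_mul_of_nonneg_right hR₁n (norm_nonneg S))
    calc ‖R₁*S*R₂‖ ≤ ‖R₁*S‖ * ‖R₂‖ := norm_mul_le _ _
      _ ≤ (K₁*t^2*‖S‖) * (K₁*t^2) :=
          mul_le_mul h1 hR₂n (norm_nonneg _) (by positivity)
      _ = (K₁*‖S‖*K₁) * (t^2*t^2) := by ring
      _ ≤ (K₁*‖S‖*K₁) * (1*t^2) := by
          apply mul_le_mul_of_nonneg_left _ (by positivity)
          nlinarith [sq_nonneg t]
      _ = K₁*‖S‖*K₁ * t^2 := by ring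
  calc |(P*S*Q - S - t•(A*S + S*B)) i j| ≤ ‖P*S*Q - S - t•(A*S + S*B)‖ :=
        entry_le_linfty _ _ _
    _ = ‖(t^2) • (A*S*B) + (1+t•A)*S*R₂ + R₁*S*(1+t•B) + R₁*S*R₂‖ := by rw [hid]
    _ ≤ ‖(t^2) • (A*S*B)‖ + ‖(1+t•A)*S*R₂‖ + ‖R₁*S*(1+t•B)‖ + ‖R₁*S*R₂‖ :=
        by
        refine (norm_add_le _ _).trans (add_le_add_left ?_ _)
        exact (norm_add_le _ _).trans (add_le_add_left (norm_add_le _ _) _)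
    _ ≤ K * t^2 := by nlinarith [sq_nonneg t]

end LinftyWorld2


section LinftyWorld3
attribute [local instance 2000] Matrix.linftyOpNormedAddCommGroup Matrix.linftyOpNormedRing
  Matrix.linftyOpNormedAlgebra

lemma omega_entry_bound {d : ℕ} (Ax Av S : Matrix (Fin d) (Fin d) ℝ) :
    ∃ K > (0:ℝ), ∀ h : ℝ, 0 < h → h ≤ 1 → ∀ i j,
      |(OmegaTilde Ax Av S h - h • Stilde S
        - (h^2/2) • (Atilde Ax Av * Stilde S + Stilde S * (Atilde Ax Av)ᵀ)) i j| ≤ K * h^3 := by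
  obtain ⟨K, hK0, hKb⟩ := prod_expansion (Atilde Ax Av) (Atilde Ax Av)ᵀ (Stilde S)
  refine ⟨K, hK0, fun h h0 h1 i j => ?_⟩
  set A := Atilde Ax Av with hA
  set St := Stilde S with hSt
  set G := A * St + St * Aᵀ with hG
  set f : ℝ → ℝ := fun t => (exp (t • A) * St * exp (t • Aᵀ)) i j with hf
  have fc : Continuous f := by
    apply Continuous.matrix_elem
    exact ((exp_continuous.comp (continuous_id.smul continuous_const)).matrix_mul
      continuous_const).matrix_mul (exp_continuous.comp (continuous_id.smul continuous_const))
  have homega : (OmegaTilde Ax Av S h) i j = ∫ t in (0:ℝ)..h, f t := by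
    show (∫ u in (0:ℝ)..h, f (h - u)) = _
    rw [intervalIntegral.integral_comp_sub_left f h]
    norm_num
  set g : ℝ → ℝ := fun t => St i j + t * G i j with hg
  have gc : Continuous g := by fun_prop
  have hgint : (∫ t in (0:ℝ)..h, g t) = h * St i j + h^2/2 * G i j := by
    show (∫ t in (0:ℝ)..h, (St i j + t * G i j)) = _
    have hi1 : IntervalIntegrable (fun _ : ℝ => St i j) MeasureTheory.volume 0 h :=
      intervalIntegrable_const
    have hi2 : IntervalIntegrable (fun t : ℝ => t * G i j) MeasureTheory.volume 0 h :=
      (continuous_id'.mul continuous_const).intervalIntegrable _ _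
    rw [intervalIntegral.integral_add hi1 hi2]
    rw [intervalIntegral.integral_const, intervalIntegral.integral_mul_const, integral_id]
    simp [smul_eq_mul]
    try ring
  have hentry : (OmegaTilde Ax Av S h - h • St - (h^2/2) • G) i j
      = ∫ t in (0:ℝ)..h, (f t - g t) := by
    rw [intervalIntegral.integral_sub (fc.intervalIntegrable _ _) (gc.intervalIntegrable _ _)]
    rw [hgint]
    simp only [Matrix.sub_apply, Matrix.smul_apply, smul_eq_mul, homega]
    ring
  rw [hentry]
  have hb : ∀ t ∈ Set.uIoc (0:ℝ) h, ‖f t - g t‖ ≤ K * t^2 := by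
    intro t ht
    rw [Set.uIoc_of_le h0.le] at ht
    have h2 := hKb t ht.1.le (ht.2.trans h1) i j
    have : f t - g t = (exp (t • A) * St * exp (t • Aᵀ) - St - t • (A * St + St * Aᵀ)) i j := by
      simp only [hf, hg, Matrix.sub_apply, Matrix.smul_apply, smul_eq_mul, hG,
        Matrix.add_apply]
      ring
    rw [Real.norm_eq_abs, this]
    exact h2
  have hKint : IntervalIntegrable (fun t : ℝ => K * t^2) MeasureTheory.volume 0 h :=
    (continuous_const.mul (continuous_pow 2)).intervalIntegrable _ _
  have := intervalIntegral.norm_integral_le_of_norm_le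
    h0.le (Filter.Eventually.of_forall fun t ht => hb t (by rwa [Set.uIoc_of_le h0.le])) hKint
  rw [Real.norm_eq_abs] at this
  refine this.trans ?_
  have hip : (∫ t in (0:ℝ)..h, t^2) = h^3/3 := by rw [integral_pow]; norm_num
  rw [intervalIntegral.integral_const_mul, hip]
  nlinarith [pow_pos h0 3]

end LinftyWorld3

attribute [local instance] Matrix.normedSpace

lemma sup_norm_mul {m : Type*} [Fintype m] (X Y : Matrix m m ℝ) :
    ‖X * Y‖ ≤ (Fintype.card m : ℝ) * ‖X‖ * ‖Y‖ := by
  rw [Matrix.norm_le_iff (by positivity)]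
  intro i j
  rw [Matrix.mul_apply, Real.norm_eq_abs]
  calc |∑ k, X i k * Y k j| ≤ ∑ k, |X i k * Y k j| := Finset.abs_sum_le_sum_abs _ _
    _ ≤ ∑ _k : m, ‖X‖ * ‖Y‖ := by
        refine Finset.sum_le_sum fun k _ => ?_
        rw [abs_mul]
        exact mul_le_mul (X.norm_entry_le_entrywise_sup_norm) (Y.norm_entry_le_entrywise_sup_norm)
          (abs_nonneg _) (norm_nonneg _)
    _ = (Fintype.card m : ℝ) * ‖X‖ * ‖Y‖ := by
        rw [Finset.sum_const, Finset.card_univ, nsmul_eq_mul]; ring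


theorem stmt2 {d : ℕ} (hd : 1 ≤ d) (Ax Av S : Matrix (Fin d) (Fin d) ℝ)
    (hS : S.PosDef) :
    ∃ C > (0:ℝ), ∃ h₀ > (0:ℝ), ∀ h : ℝ, 0 < h → h < h₀ →
      IsUnit (OmegaRR Ax Av S h) ∧
      ‖(OmegaRR Ax Av S h)⁻¹ -
          ((1 / h) • S⁻¹ - (1 / 2 : ℝ) • (S⁻¹ * Av + Avᵀ * S⁻¹))‖ ≤ C * h := by
  obtain ⟨K, hK0, hKb⟩ := omega_entry_bound Ax Av S
  set B : Matrix (Fin d) (Fin d) ℝ := (1/2 : ℝ) • (Av * S + S * Avᵀ) with hBdef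
  have hdet : (0:ℝ) < S.det := hS.det_pos
  have hSd : IsUnit S.det := isUnit_iff_ne_zero.mpr hdet.ne'
  have hS1 : S * S⁻¹ = 1 := Matrix.mul_nonsing_inv S hSd
  have hS2 : S⁻¹ * S = 1 := Matrix.nonsing_inv_mul S hSd
  set Q : Matrix (Fin d) (Fin d) ℝ := S⁻¹ * B * S⁻¹ with hQdef
  set c : ℝ := (Fintype.card (Fin d) : ℝ) with hcdef

  have hc0 : 0 ≤ c := by positivity
  set c0 : ℝ := ‖S⁻¹‖ + ‖Q‖ with hc0def
  have hc00 : 0 ≤ c0 := by positivity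
  set C₂ : ℝ := c*(K+‖B‖)*‖Q‖ + c*K*‖S⁻¹‖ with hC₂def
  have hC₂0 : 0 ≤ C₂ := by positivity
  clear_value B Q c c0 C₂
  have hdc : ContinuousAt (fun M : Matrix (Fin d) (Fin d) ℝ => M.det) S :=
    (continuous_id.matrix_det).continuousAt
  obtain ⟨δ, hδ0, hδ⟩ := Metric.continuousAt_iff.mp hdc S.det hdet
  refine ⟨2*c*c0*C₂ + 1, by positivity,
    min (min 1 (δ/(K+‖B‖+1))) (1/(2*c*C₂+1)), by positivity, fun h h0 hh => ?_⟩
  have hne : h ≠ 0 := h0.ne'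
  have hh1 : h ≤ 1 := le_of_lt (lt_of_lt_of_le hh ((min_le_left _ _).trans (min_le_left _ _)))
  have hhδ : h < δ/(K+‖B‖+1) := lt_of_lt_of_le hh ((min_le_left _ _).trans (min_le_right _ _))
  have hhC : h < 1/(2*c*C₂+1) := lt_of_lt_of_le hh (min_le_right _ _)
  set M : Matrix (Fin d) (Fin d) ℝ := OmegaRR Ax Av S h with hMdef
  set N : Matrix (Fin d) (Fin d) ℝ := h⁻¹ • M with hNdef
  clear_value M N
  -- step 1 : block bound
  have hMb : ‖M - h • S - (h^2) • B‖ ≤ K * h^3 := by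
    rw [Matrix.norm_le_iff (by positivity)]
    intro i j
    have hent := hKb h h0 hh1 (Sum.inr i) (Sum.inr j)
    have key : (M - h • S - (h^2) • B) i j =
        (OmegaTilde Ax Av S h - h • Stilde S
          - (h^2/2) • (Atilde Ax Av * Stilde S + Stilde S * (Atilde Ax Av)ᵀ))
          (Sum.inr i) (Sum.inr j) := by
      simp only [hMdef, hBdef, OmegaRR, Matrix.sub_apply, Matrix.smul_apply, smul_eq_mul,
        Matrix.toBlocks₂₂, Matrix.of_apply, Matrix.add_apply, Atilde, Stilde,
        Matrix.fromBlocks_transpose, Matrix.fromBlocks_multiply, Matrix.fromBlocks_add,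
        Matrix.fromBlocks_apply₂₂]
      simp [Matrix.add_apply, Matrix.smul_apply, smul_eq_mul]
      ring
    rw [Real.norm_eq_abs, key]
    exact hent
  -- step 2 : bound for N
  have hNb : ‖N - S - h • B‖ ≤ K * h^2 := by
    have hrw : N - S - h • B = h⁻¹ • (M - h • S - (h^2) • B) := by
      rw [hNdef]
      match_scalars <;> (field_simp; try ring)
    rw [hrw, norm_smul, Real.norm_eq_abs, abs_of_pos (inv_pos.mpr h0)]
    calc h⁻¹ * ‖M - h • S - (h^2) • B‖ ≤ h⁻¹ * (K * h^3) :=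
          mul_le_mul_of_nonneg_left hMb (by positivity)
      _ = K * h^2 := by field_simp
  have hNS : ‖N - S‖ ≤ h * (K + ‖B‖) := by
    have : N - S = (N - S - h • B) + h • B := by abel
    rw [this]
    refine (norm_add_le _ _).trans ?_
    rw [norm_smul, Real.norm_eq_abs, abs_of_pos h0]
    nlinarith [norm_nonneg B, hNb, mul_nonneg (mul_nonneg hK0.le h0.le) (sub_nonneg.mpr hh1)]
  -- step 3 : invertibility of N
  have hdetN : N.det ≠ 0 := by
    have hpos : (0:ℝ) < K + ‖B‖ + 1 := by positivity
    have hmul : h * (K + ‖B‖ + 1) < δ := (lt_div_iff₀ hpos).mp hhδ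
    have hlt : dist N S < δ := by
      rw [dist_eq_norm]
      refine lt_of_le_of_lt hNS ?_
      nlinarith
    have hd1 := hδ hlt
    rw [Real.dist_eq] at hd1
    have hd2 := abs_lt.mp hd1
    intro hzero
    rw [hzero] at hd2
    linarith [hd2.1]
  have hNu : IsUnit N.det := isUnit_iff_ne_zero.mpr hdetN
  -- step 4 : approximation of N⁻¹
  set P : Matrix (Fin d) (Fin d) ℝ := S⁻¹ - h • Q with hPdef
  clear_value P
  have hPn : ‖P‖ ≤ c0 := by
    rw [hPdef]
    refine (norm_sub_le _ _).trans ?_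
    rw [norm_smul, Real.norm_eq_abs, abs_of_pos h0]
    nlinarith [norm_nonneg Q]
  have hSQ : S * Q = B * S⁻¹ := by
    rw [hQdef, ← Matrix.mul_assoc, ← Matrix.mul_assoc, hS1, Matrix.one_mul]
  have hkey : 1 - N * P = h • ((N - S) * Q) - (N - S - h • B) * S⁻¹ := by
    have e1 : N * P = N * S⁻¹ - h • (N * Q) := by rw [hPdef, mul_sub, Matrix.mul_smul]
    have e2 : (N - S) * Q = N * Q - S * Q := Matrix.sub_mul _ _ _
    have e3 : (N - S - h • B) * S⁻¹ = N * S⁻¹ - S * S⁻¹ - h • (B * S⁻¹) := by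
      rw [Matrix.sub_mul, Matrix.sub_mul, smul_mul_assoc]
      try rfl
    rw [e1, e2, e3, hSQ, hS1]
    module
  have hNP : ‖1 - N * P‖ ≤ C₂ * h^2 := by
    rw [hkey]
    refine (norm_sub_le _ _).trans ?_
    have e1 : ‖h • ((N - S) * Q)‖ ≤ c*(K+‖B‖)*‖Q‖ * h^2 := by
      rw [norm_smul, Real.norm_eq_abs, abs_of_pos h0]
      have t1 := sup_norm_mul (N - S) Q
      rw [← hcdef] at t1
      have t2 : c * ‖N - S‖ * ‖Q‖ ≤ c * (h*(K+‖B‖)) * ‖Q‖ :=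
        mul_le_mul_of_nonneg_right (mul_le_mul_of_nonneg_left hNS hc0) (norm_nonneg _)
      calc h * ‖(N - S) * Q‖ ≤ h * (c * (h*(K+‖B‖)) * ‖Q‖) :=
            mul_le_mul_of_nonneg_left (t1.trans t2) h0.le
        _ = c*(K+‖B‖)*‖Q‖ * h^2 := by ring
    have e2 : ‖(N - S - h • B) * S⁻¹‖ ≤ c*K*‖S⁻¹‖ * h^2 := by
      have t1 := sup_norm_mul (N - S - h • B) S⁻¹
      rw [← hcdef] at t1
      calc ‖(N - S - h • B) * S⁻¹‖ ≤ c * ‖N - S - h • B‖ * ‖S⁻¹‖ := t1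
        _ ≤ c * (K * h^2) * ‖S⁻¹‖ :=
            mul_le_mul_of_nonneg_right (mul_le_mul_of_nonneg_left hNb hc0) (norm_nonneg _)
        _ = c*K*‖S⁻¹‖ * h^2 := by ring
    have hsplit : C₂ * h^2 = c*(K+‖B‖)*‖Q‖ * h^2 + c*K*‖S⁻¹‖ * h^2 := by
      rw [hC₂def]; ring
    linarith
  have hNiP : N⁻¹ - P = N⁻¹ * (1 - N * P) := by
    rw [mul_sub, mul_one, ← Matrix.mul_assoc, Matrix.nonsing_inv_mul _ hNu, Matrix.one_mul]
  have hNP2 : ‖N⁻¹ - P‖ ≤ c * ‖N⁻¹‖ * (C₂ * h^2) := by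
    rw [hNiP]
    have t1 := sup_norm_mul N⁻¹ (1 - N * P)
    rw [← hcdef] at t1
    refine t1.trans ?_
    exact mul_le_mul_of_nonneg_left hNP (by positivity)
  have hsmall : c * C₂ * h^2 ≤ 1/2 := by
    have hpos2 : (0:ℝ) < 2*c*C₂+1 := by positivity
    have hmul2 : h * (2*c*C₂+1) < 1 := (lt_div_iff₀ hpos2).mp hhC
    have k1 : c*C₂*h ≤ 1/2 := by nlinarith
    calc c*C₂*h^2 = (c*C₂*h)*h := by ring
      _ ≤ (1/2)*h := mul_le_mul_of_nonneg_right k1 h0.le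
      _ ≤ (1/2)*1 := mul_le_mul_of_nonneg_left hh1 (by norm_num)
      _ = 1/2 := by norm_num
  have hNinv : ‖N⁻¹‖ ≤ 2 * c0 := by
    have h1 : ‖N⁻¹‖ ≤ ‖P‖ + ‖N⁻¹ - P‖ := by
      calc ‖N⁻¹‖ = ‖P + (N⁻¹ - P)‖ := by rw [add_sub_cancel]
        _ ≤ ‖P‖ + ‖N⁻¹ - P‖ := norm_add_le _ _
    have h2 := mul_le_mul_of_nonneg_right hsmall (norm_nonneg (N⁻¹ : Matrix (Fin d) (Fin d) ℝ))
    nlinarith [norm_nonneg (N⁻¹ : Matrix (Fin d) (Fin d) ℝ), hNP2, h1, hPn]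
  have hfin : ‖N⁻¹ - P‖ ≤ 2*c*c0*C₂ * h^2 := by
    have h2 := mul_le_mul_of_nonneg_right (mul_le_mul_of_nonneg_left hNinv hc0)
      (by positivity : (0:ℝ) ≤ C₂ * h^2)
    nlinarith
  -- step 5 : conclude
  have hMN : M = h • N := by rw [hNdef, smul_smul, mul_inv_cancel₀ hne, one_smul]
  have hMu : IsUnit M := by
    rw [Matrix.isUnit_iff_isUnit_det, hMN, Matrix.det_smul, isUnit_iff_ne_zero]
    exact mul_ne_zero (pow_ne_zero _ hne) hdetN
  refine ⟨hMu, ?_⟩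
  have hMinv : M⁻¹ = h⁻¹ • N⁻¹ := by
    apply Matrix.inv_eq_left_inv
    rw [hMN, Matrix.smul_mul, Matrix.mul_smul, smul_smul, inv_mul_cancel₀ hne,
      Matrix.nonsing_inv_mul _ hNu, one_smul]
  have hQval : Q = (1 / 2 : ℝ) • (S⁻¹ * Av + Avᵀ * S⁻¹) := by
    have hc2 : ∀ X : Matrix (Fin d) (Fin d) ℝ, S⁻¹ * (S * X) = X := fun X => by
      rw [← Matrix.mul_assoc, hS2, Matrix.one_mul]
    rw [hQdef, hBdef]
    simp only [Matrix.mul_smul, Matrix.smul_mul, mul_add, add_mul, Matrix.mul_assoc, hc2, hS1,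
      Matrix.mul_one, smul_add]
  have hT : (1 / h) • S⁻¹ - (1 / 2 : ℝ) • (S⁻¹ * Av + Avᵀ * S⁻¹) = h⁻¹ • P := by
    rw [hPdef, smul_sub, smul_smul, inv_mul_cancel₀ hne, one_smul, hQval, one_div]
  rw [hT, hMinv, ← smul_sub, norm_smul, Real.norm_eq_abs, abs_of_pos (inv_pos.mpr h0)]
  calc h⁻¹ * ‖N⁻¹ - P‖ ≤ h⁻¹ * (2*c*c0*C₂ * h^2) :=
        mul_le_mul_of_nonneg_left hfin (by positivity)
    _ = 2*c*c0*C₂ * h := by field_simp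
    _ ≤ (2*c*c0*C₂ + 1) * h := by nlinarith [h0.le]
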